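/- Let T = (W,D,R,δ,ρ) be a tree-shaped increasing domain model rooted at r, let d ∉ D and c ∈ δ(r), and let T_{d↦c} be the model obtained by adding d to every local domain while making d mimic c (as defined in the context). Then for every assignment σ, every FOML formula φ, and every world w ∈ W: T,w,σ[x↦c] ⊨ φ iff T_{d↦c},w,σ[x↦c] ⊨ φ iff T_{d↦c},w,σ[x↦d] ⊨ φ. -/
import Mathlib


set_option maxHeartbeats 1000000

/-! ## Syntax of first-order modal logic (FOML)

Predicate symbols and variables are represented by natural numbers; an atom
`atom p args` applies the predicate symbol `p` to the list of variables `args`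
(the arity of `p` in this occurrence is the length of `args`). -/
inductive Formula : Type where
  | atom (p : ℕ) (args : List ℕ)
  | neg  (φ : Formula)
  | and  (φ ψ : Formula)
  | or   (φ ψ : Formula)
  | box  (φ : Formula)
  | dia  (φ : Formula)
  | ex   (x : ℕ) (φ : Formula)
  | all  (x : ℕ) (φ : Formula)
deriving DecidableEq

namespace Formula

def imp (φ ψ : Formula) : Formula := .or φ.neg ψ
def biimp (φ ψ : Formula) : Formula := .and (imp φ ψ) (imp ψ φ)
/-- a fixed tautology `⊤` -/
def top : Formula := .or (.atom 0 []) (.neg (.atom 0 []))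
/-- a fixed contradiction `⊥` -/
def bot : Formula := .and (.atom 0 []) (.neg (.atom 0 []))

end Formula

def bigAnd (l : List Formula) : Formula := l.foldr Formula.and Formula.top
def bigOr  (l : List Formula) : Formula := l.foldr Formula.or Formula.bot

/-! ## Semantics: Kripke structures with world-relative domains -/

structure Model where
  W : Type
  D : Type
  R : W → W → Prop
  dom : W → Set D
  ρ : W → ℕ → Set (List D)

/-- `M` is an increasing domain model: nonempty countable set of worlds, nonempty
countable domain, nonempty local domains that increase along the accessibility
relation, and interpretations of predicates at a world take values in the local
domain of that world. -/
def Model.Increasing (M : Model) : Prop :=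
  Nonempty M.W ∧ Nonempty M.D ∧ Countable M.W ∧ Countable M.D ∧
    (∀ w, (M.dom w).Nonempty) ∧
    (∀ w v, M.R w v → M.dom w ⊆ M.dom v) ∧
    (∀ w p l, l ∈ M.ρ w p → ∀ d ∈ l, d ∈ M.dom w)

def Model.sat (M : Model) : M.W → (ℕ → M.D) → Formula → Prop
  | w, σ, .atom p args => args.map σ ∈ M.ρ w p
  | w, σ, .neg φ => ¬ M.sat w σ φ
  | w, σ, .and φ ψ => M.sat w σ φ ∧ M.sat w σ ψ
  | w, σ, .or φ ψ => M.sat w σ φ ∨ M.sat w σ ψ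
  | w, σ, .box φ => ∀ v, M.R w v → M.sat v σ φ
  | w, σ, .dia φ => ∃ v, M.R w v ∧ M.sat v σ φ
  | w, σ, .ex x φ => ∃ d ∈ M.dom w, M.sat w (Function.update σ x d) φ
  | w, σ, .all x φ => ∀ d ∈ M.dom w, M.sat w (Function.update σ x d) φ

/-- the assignment `σ` is relevant at the world `w` -/
def Model.relevant (M : Model) (w : M.W) (σ : ℕ → M.D) : Prop := ∀ x, σ x ∈ M.dom w

/-- satisfiability over increasing domain models -/
def Satisfiable (φ : Formula) : Prop :=
  ∃ (M : Model), M.Increasing ∧ ∃ (w : M.W) (σ : ℕ → M.D), M.relevant w σ ∧ M.sat w σ φ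

/-- `M` is a tree model rooted at `r`: every world is reachable from `r`, the
root has no predecessor, every world has at most one predecessor, and there
are no cycles. -/
def IsTreeRootedAt (M : Model) (r : M.W) : Prop :=
  (∀ w, Relation.ReflTransGen M.R r w) ∧
    (∀ w, ¬ M.R w r) ∧
    (∀ w v v', M.R v w → M.R v' w → v = v') ∧
    (∀ w, ¬ Relation.TransGen M.R w w)

/-- `addMimic M c` is the model `T_{d↦c}` obtained from `M` by adding one fresh
element `d` (represented by `none : Option M.D`) to every local domain, where
`d` mimics `c`: the valuation of a predicate consists of all tuples obtained
from a tuple of the old valuation by replacing zero or more occurrences of `c`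
by `d`. -/
def addMimic (M : Model) (c : M.D) : Model where
  W := M.W
  D := Option M.D
  R := M.R
  dom w := insert none (Option.some '' M.dom w)
  ρ w p :=
    { l | ∃ l₀ ∈ M.ρ w p,
        List.Forall₂ (fun e' e => e' = some e ∨ (e = c ∧ e' = none)) l l₀ }

private lemma mimic_key (M : Model) (c : M.D) (hc : ∀ w, c ∈ M.dom w)
    (φ : Formula) :
    ∀ (w : M.W) (τ : ℕ → M.D) (τ' : ℕ → Option M.D),
      (∀ y, τ' y = some (τ y) ∨ (τ y = c ∧ τ' y = none)) →
      (M.sat w τ φ ↔ (addMimic M c).sat w τ' φ) := by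
  induction φ with
  | atom p args =>
    intro w τ τ' h
    simp only [Model.sat, addMimic, Set.mem_setOf_eq, List.map]
    constructor
    · intro hmem
      refine ⟨args.map τ, hmem, ?_⟩
      rw [List.forall₂_map_left_iff, List.forall₂_map_right_iff]
      exact (List.forall₂_same).2 (fun a _ => h a)
    · rintro ⟨l₀, hl₀, hrel⟩
      rw [List.forall₂_map_left_iff] at hrel
      have heq : ∀ (args : List ℕ) (l₀ : List M.D),
          List.Forall₂ (fun a e => τ' a = some e ∨ (e = c ∧ τ' a = none)) args l₀ →
          args.map τ = l₀ := by
        intro args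
        induction args with
        | nil => intro l₀ hrel; cases hrel; rfl
        | cons a tl ih =>
          intro l₀ hrel
          cases hrel with
          | cons hab htl =>
            rename_i b tl'
            simp only [List.map_cons, ih _ htl]
            congr 1
            rcases h a with ha | ⟨ha, ha'⟩
            · rcases hab with hb | ⟨hb, hb'⟩
              · rw [ha] at hb; exact (Option.some_inj.1 hb)
              · rw [hb'] at ha; exact absurd ha (by simp)
            · rcases hab with hb | ⟨hb, _⟩
              · rw [ha'] at hb; exact absurd hb.symm (by simp)
              · rw [ha, hb]
      have heq := heq args l₀ hrel
      rw [heq]; exact hl₀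
  | neg φ ih =>
    intro w τ τ' h
    exact not_congr (ih w τ τ' h)
  | and φ ψ ih1 ih2 =>
    intro w τ τ' h
    exact and_congr (ih1 w τ τ' h) (ih2 w τ τ' h)
  | or φ ψ ih1 ih2 =>
    intro w τ τ' h
    exact or_congr (ih1 w τ τ' h) (ih2 w τ τ' h)
  | box φ ih =>
    intro w τ τ' h
    exact forall_congr' fun v => imp_congr Iff.rfl (ih v τ τ' h)
  | dia φ ih =>
    intro w τ τ' h
    exact exists_congr fun v => and_congr Iff.rfl (ih v τ τ' h)
  | ex y φ ih =>
    intro w τ τ' h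
    constructor
    · rintro ⟨d, hd, hsat⟩
      refine ⟨some d, Set.mem_insert_of_mem _ ⟨d, hd, rfl⟩, ?_⟩
      refine (ih w (Function.update τ y d) (Function.update τ' y (some d)) ?_).1 hsat
      intro z
      rcases eq_or_ne z y with rfl | hz
      · simp
      · simp [Function.update_of_ne hz]; exact h z
    · rintro ⟨d', hd', hsat⟩
      rcases Set.mem_insert_iff.1 hd' with rfl | ⟨d, hd, rfl⟩
      · refine ⟨c, hc w, ?_⟩
        refine (ih w (Function.update τ y c) (Function.update τ' y none) ?_).2 hsat
        intro z
        rcases eq_or_ne z y with rfl | hz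
        · simp
        · simp [Function.update_of_ne hz]; exact h z
      · refine ⟨d, hd, ?_⟩
        refine (ih w (Function.update τ y d) (Function.update τ' y (some d)) ?_).2 hsat
        intro z
        rcases eq_or_ne z y with rfl | hz
        · simp
        · simp [Function.update_of_ne hz]; exact h z
  | all y φ ih =>
    intro w τ τ' h
    constructor
    · intro hall d' hd'
      rcases Set.mem_insert_iff.1 hd' with rfl | ⟨d, hd, rfl⟩
      · refine (ih w (Function.update τ y c) (Function.update τ' y none) ?_).1 (hall c (hc w))
        intro z
        rcases eq_or_ne z y with rfl | hz
        · simp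
        · simp [Function.update_of_ne hz]; exact h z
      · refine (ih w (Function.update τ y d) (Function.update τ' y (some d)) ?_).1 (hall d hd)
        intro z
        rcases eq_or_ne z y with rfl | hz
        · simp
        · simp [Function.update_of_ne hz]; exact h z
    · intro hall d hd
      refine (ih w (Function.update τ y d) (Function.update τ' y (some d)) ?_).2
        (hall (some d) (Set.mem_insert_of_mem _ ⟨d, hd, rfl⟩))
      intro z
      rcases eq_or_ne z y with rfl | hz
      · simp
      · simp [Function.update_of_ne hz]; exact h z


/-- Let `T` be a tree-shaped increasing domain model rooted at
`r`, let `c ∈ δ(r)`, and let `T_{d↦c}` be obtained by adding the fresh element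
`d` mimicking `c`.  Then for every assignment `σ`, every FOML formula `φ` and
every world `w`:
`T,w,σ[x↦c] ⊨ φ`  iff  `T_{d↦c},w,σ[x↦c] ⊨ φ`  iff  `T_{d↦c},w,σ[x↦d] ⊨ φ`. -/
theorem addMimic_preserves_truth (M : Model) (hM : M.Increasing) (r : M.W)
    (htree : IsTreeRootedAt M r) (c : M.D) (hc : c ∈ M.dom r)
    (w : M.W) (σ : ℕ → M.D) (x : ℕ) (φ : Formula) :
    (M.sat w (Function.update σ x c) φ ↔
      (addMimic M c).sat w (Function.update (fun v => some (σ v)) x (some c)) φ) ∧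
    ((addMimic M c).sat w (Function.update (fun v => some (σ v)) x (some c)) φ ↔
      (addMimic M c).sat w (Function.update (fun v => some (σ v)) x none) φ) := by
  obtain ⟨-, -, -, -, -, hmono, -⟩ := hM
  have hcw : ∀ w, c ∈ M.dom w := by
    intro w
    induction htree.1 w with
    | refl => exact hc
    | tail _ hstep ih => exact hmono _ _ hstep ih
  have h1 : ∀ y, (Function.update (fun v => some (σ v)) x (some c)) y =
      some ((Function.update σ x c) y) ∨
      ((Function.update σ x c) y = c ∧
        (Function.update (fun v => some (σ v)) x (some c)) y = none) := by
    intro y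
    rcases eq_or_ne y x with rfl | hy
    · simp
    · simp [Function.update_of_ne hy]
  have h2 : ∀ y, (Function.update (fun v => some (σ v)) x none) y =
      some ((Function.update σ x c) y) ∨
      ((Function.update σ x c) y = c ∧
        (Function.update (fun v => some (σ v)) x none) y = none) := by
    intro y
    rcases eq_or_ne y x with rfl | hy
    · simp
    · simp [Function.update_of_ne hy]
  have A := mimic_key M c hcw φ w _ _ h1
  have B := mimic_key M c hcw φ w _ _ h2
  exact ⟨A, A.symm.trans B⟩
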